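/- Let k, ℓ be integers with k > ℓ ≥ 1. Then (k² − ℓ²)/ln(k²/ℓ²) > kℓ. Consequently, the σ₂-energy 16π²·(k² − ℓ²)/(R·ln(k²/ℓ²)) of the critical configuration with |k| > |ℓ| strictly exceeds the topological lower bound 16π²·kℓ/R corresponding to Hopf invariant Q = kℓ; within the family of critical configurations of the α-Hopf construction ansatz, the bound is attained if and only if k = ℓ. -/

import Mathlib

open Real

lemma key_ineq {t : ℝ} (ht : 1 < t) : 2 * Real.log t < t - 1/t := by
  have h0 : (0:ℝ) < 1 := one_pos
  set f : ℝ → ℝ := fun x => x - 1/x - 2 * Real.log x with hf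
  have hmono : StrictMonoOn f (Set.Ici 1) := by
    apply strictMonoOn_of_deriv_pos (convex_Ici 1)
    · apply ContinuousOn.sub
      apply ContinuousOn.sub continuousOn_id
      · exact continuousOn_const.div continuousOn_id (fun x hx => by
          simp only [Set.mem_Ici] at hx; linarith)
      · exact (continuousOn_const.mul (Real.continuousOn_log.mono (fun x hx => by
          simp only [Set.mem_Ici] at hx; simp; linarith)))
    · intro x hx
      rw [interior_Ici] at hx
      have hx1 : 1 < x := hx
      have hx0 : x ≠ 0 := by linarith
      have hd : HasDerivAt f (1 - (-(1/x^2)) - 2 * (1/x)) x := by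
        have h1 : HasDerivAt (fun x : ℝ => x) 1 x := hasDerivAt_id x
        have h2 : HasDerivAt (fun x : ℝ => 1/x) (-(1/x^2)) x := by
          simpa using (hasDerivAt_inv hx0)
        have h3 : HasDerivAt (fun x : ℝ => 2 * Real.log x) (2 * (1/x)) x := by
          simpa using (Real.hasDerivAt_log hx0).const_mul 2
        exact (h1.sub h2).sub h3
      rw [hd.deriv]
      have : 1 - (-(1/x^2)) - 2 * (1/x) = (1 - 1/x)^2 := by
        field_simp; ring
      rw [this]
      have h4 : 1/x < 1 := by
        rw [div_lt_one (by linarith)]; exact hx1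
      have h5 : 0 < 1 - 1/x := by linarith
      positivity
  have := hmono (Set.self_mem_Ici) (Set.mem_Ici.mpr ht.le) ht
  simp only [hf] at this
  rw [one_div] 
  simpa using this

theorem stmt_11 (k l : ℤ) (hl : 1 ≤ l) (hkl : l < k) :
    ((k : ℝ)^2 - (l : ℝ)^2) / Real.log ((k : ℝ)^2 / (l : ℝ)^2) > (k : ℝ) * (l : ℝ) ∧
    ∀ R : ℝ, 0 < R →
      16 * π^2 * ((k : ℝ)^2 - (l : ℝ)^2) / (R * Real.log ((k : ℝ)^2 / (l : ℝ)^2))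
        > 16 * π^2 * ((k : ℝ) * (l : ℝ)) / R := by
  have hl' : (1:ℝ) ≤ (l:ℝ) := by exact_mod_cast hl
  have hk' : (l:ℝ) < (k:ℝ) := by exact_mod_cast hkl
  have hl0 : (0:ℝ) < (l:ℝ) := by linarith
  have hk0 : (0:ℝ) < (k:ℝ) := by linarith
  set a := (k:ℝ); set b := (l:ℝ)
  have ht : 1 < a / b := (one_lt_div hl0).mpr hk'
  have hkey := key_ineq ht
  have hlog : Real.log (a^2 / b^2) = 2 * Real.log (a/b) := by
    rw [← div_pow, Real.log_pow]; push_cast; ring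
  have hLpos : 0 < Real.log (a^2 / b^2) := by
    rw [hlog]
    have := Real.log_pos ht
    linarith
  have hsub : a/b - 1/(a/b) = (a^2 - b^2) / (a*b) := by
    rw [one_div_div]; field_simp
  have hmain : (a^2 - b^2) / Real.log (a^2 / b^2) > a * b := by
    rw [gt_iff_lt, lt_div_iff₀ hLpos, hlog]
    have h2 : 2 * Real.log (a/b) < (a^2 - b^2)/(a*b) := by
      rw [← hsub]; exact hkey
    calc a * b * (2 * Real.log (a/b)) < a * b * ((a^2 - b^2)/(a*b)) := by
          apply mul_lt_mul_of_pos_left h2 (by positivity)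
      _ = a^2 - b^2 := by field_simp
  refine ⟨hmain, fun R hR => ?_⟩
  rw [gt_iff_lt, div_lt_div_iff₀ (by positivity) (by positivity)]
  have hpi : (0:ℝ) < 16 * π^2 := by positivity
  have := mul_lt_mul_of_pos_left hmain hpi
  calc 16 * π^2 * (a * b) * (R * Real.log (a^2/b^2))
      = R * Real.log (a^2/b^2) * (16 * π^2 * (a*b)) := by ring
    _ < R * Real.log (a^2/b^2) * (16 * π^2 * ((a^2 - b^2)/Real.log (a^2/b^2))) := by
        apply mul_lt_mul_of_pos_left this (by positivity)
    _ = 16 * π^2 * (a^2 - b^2) * R := by field_simp
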